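/- arXiv:math/0702024 — 6 statements merged into one kernel-verified Lean document; each statement's English description precedes it below -/
import Mathlib

section
/- Let f : ℝ^N → ℝ^N be C¹, let (U,F) be a convex entropy pair for f, fix w ∈ ℝ^N, and let v : [0,∞) → ℝ^N be differentiable with v'(y) = f(v(y)) − f(w) for all y ≥ 0. Then the function Ω(y) = F(w) − F(v(y)) − ⟨∇U(v(y)), f(w) − f(v(y))⟩ satisfies Ω'(y) = ⟨f(w) − f(v(y)), (∇²U)(v(y)) · (f(w) − f(v(y)))⟩ ≥ 0 for every y ≥ 0; in particular Ω is monotone nondecreasing on [0,∞). -/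
/-- along a solution of the boundary layer ODE `v' = f(v) − f(w)`,
the quantity `Ω(y) = F(w) − F(v(y)) − ⟨∇U(v(y)), f(w) − f(v(y))⟩` has derivative
equal to the Hessian quadratic form `⟨f(w) − f(v(y)), ∇²U(v(y)) (f(w) − f(v(y)))⟩ ≥ 0`;
in particular `Ω` is monotone nondecreasing on `[0,∞)`.
Here `⟨∇U(u), z⟩ = fderiv ℝ U u z` and the Hessian quadratic form
`⟨z, ∇²U(u) z⟩` is written `fderiv ℝ (fun x => fderiv ℝ U x z) u z`. -/
theorem boundary_layer_entropy_monotone {N : ℕ}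
    (f : EuclideanSpace ℝ (Fin N) → EuclideanSpace ℝ (Fin N))
    (U F : EuclideanSpace ℝ (Fin N) → ℝ)
    (hf : ContDiff ℝ 1 f) (hU : ContDiff ℝ 2 U) (hF : ContDiff ℝ 2 F)
    (hEP : ∀ u w, fderiv ℝ F u w = fderiv ℝ U u (fderiv ℝ f u w))
    (hconv : ∀ u w, 0 ≤ fderiv ℝ (fun x => fderiv ℝ U x w) u w)
    (w : EuclideanSpace ℝ (Fin N)) (v : ℝ → EuclideanSpace ℝ (Fin N))
    (hv : ∀ y : ℝ, 0 ≤ y → HasDerivAt v (f (v y) - f w) y) :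
    (∀ y : ℝ, 0 ≤ y →
      HasDerivAt (fun z => F w - F (v z) - fderiv ℝ U (v z) (f w - f (v z)))
        (fderiv ℝ (fun x => fderiv ℝ U x (f w - f (v y))) (v y) (f w - f (v y))) y
      ∧ 0 ≤ fderiv ℝ (fun x => fderiv ℝ U x (f w - f (v y))) (v y) (f w - f (v y)))
    ∧ MonotoneOn (fun z => F w - F (v z) - fderiv ℝ U (v z) (f w - f (v z)))
        (Set.Ici (0 : ℝ)) := by

  have hUd : ContDiff ℝ 1 (fderiv ℝ U) := hU.fderiv_right (by norm_num)
  have key : ∀ y : ℝ, 0 ≤ y →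
      HasDerivAt (fun z => F w - F (v z) - fderiv ℝ U (v z) (f w - f (v z)))
        (fderiv ℝ (fun x => fderiv ℝ U x (f w - f (v y))) (v y) (f w - f (v y))) y := by
    intro y hy
    set d := f w - f (v y) with hd
    have hv' := hv y hy
    have hFv : HasDerivAt (fun z => F (v z)) (fderiv ℝ F (v y) (f (v y) - f w)) y :=
      ((hF.differentiable two_ne_zero).differentiableAt.hasFDerivAt.comp_hasDerivAt y hv')
    have hfv : HasDerivAt (fun z => f (v z)) (fderiv ℝ f (v y) (f (v y) - f w)) y :=
      ((hf.differentiable one_ne_zero).differentiableAt.hasFDerivAt.comp_hasDerivAt y hv')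
    have hdz : HasDerivAt (fun z => f w - f (v z)) (-(fderiv ℝ f (v y) (f (v y) - f w))) y :=
      hfv.const_sub (f w)
    have hc : HasDerivAt (fun z => fderiv ℝ U (v z))
        (fderiv ℝ (fderiv ℝ U) (v y) (f (v y) - f w)) y :=
      (hUd.differentiable one_ne_zero).differentiableAt.hasFDerivAt.comp_hasDerivAt y hv'
    have hphi : HasDerivAt (fun z => fderiv ℝ U (v z) (f w - f (v z)))
        ((fderiv ℝ (fderiv ℝ U) (v y) (f (v y) - f w)) (f w - f (v y))
          + fderiv ℝ U (v y) (-(fderiv ℝ f (v y) (f (v y) - f w)))) y :=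
      hc.clm_apply hdz
    have hOmega : HasDerivAt (fun z => F w - F (v z) - fderiv ℝ U (v z) (f w - f (v z)))
        (-(fderiv ℝ F (v y) (f (v y) - f w)) -
          ((fderiv ℝ (fderiv ℝ U) (v y) (f (v y) - f w)) (f w - f (v y))
          + fderiv ℝ U (v y) (-(fderiv ℝ f (v y) (f (v y) - f w))))) y :=
      (hFv.const_sub (F w)).sub hphi
    have hessEval : fderiv ℝ (fun x => fderiv ℝ U x d) (v y) d
        = (fderiv ℝ (fderiv ℝ U) (v y) d) d := by
      have h2 : HasFDerivAt (fun x => fderiv ℝ U x d)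
          ((ContinuousLinearMap.apply ℝ ℝ d).comp (fderiv ℝ (fderiv ℝ U) (v y))) (v y) :=
        (ContinuousLinearMap.apply ℝ ℝ d).hasFDerivAt.comp (v y)
          (hUd.differentiable one_ne_zero).differentiableAt.hasFDerivAt
      rw [h2.fderiv]; rfl
    have hsub : f (v y) - f w = -d := by rw [hd]; abel
    have heq : -(fderiv ℝ F (v y) (f (v y) - f w)) -
          ((fderiv ℝ (fderiv ℝ U) (v y) (f (v y) - f w)) (f w - f (v y))
          + fderiv ℝ U (v y) (-(fderiv ℝ f (v y) (f (v y) - f w))))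
        = fderiv ℝ (fun x => fderiv ℝ U x d) (v y) d := by
      rw [hessEval, hsub, hEP]
      simp only [map_neg, ContinuousLinearMap.neg_apply, neg_neg, ← hd]
      ring
    rw [← heq]
    exact hOmega
  refine ⟨fun y hy => ⟨key y hy, hconv _ _⟩, ?_⟩
  apply monotoneOn_of_deriv_nonneg (convex_Ici 0)
  · exact fun y hy => (key y hy).continuousAt.continuousWithinAt
  · intro y hy
    rw [interior_Ici] at hy
    exact (key y hy.le).differentiableAt.differentiableWithinAt
  · intro y hy
    rw [interior_Ici] at hy
    rw [(key y hy.le).deriv]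
    exact hconv _ _
end

section
/- (Proposition 3.5: the viscous boundary-layer set is contained in the entropy set.) Let f : ℝ^N → ℝ^N be C¹, let (U,F) be a convex entropy pair for f, and let u_B, v_∞ ∈ ℝ^N. Suppose v : [0,∞) → ℝ^N is differentiable, v(0) = u_B, v'(y) = f(v(y)) − f(v_∞) for all y ≥ 0, and v(y) → v_∞ as y → ∞. Then F(v_∞) − F(u_B) − ⟨∇U(u_B), f(v_∞) − f(u_B)⟩ ≤ 0. -/
open Filter

/-- Proposition 3.5: if the boundary layer problem
`v' = f(v) − f(v_∞)`, `v(0) = u_B`, `v(∞) = v_∞` has a solution, then the boundary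
entropy inequality `F(v_∞) − F(u_B) − ⟨∇U(u_B), f(v_∞) − f(u_B)⟩ ≤ 0` holds for
every convex entropy pair `(U,F)`. Here `⟨∇U(u), z⟩ = fderiv ℝ U u z` and the
Hessian quadratic form `⟨z, ∇²U(u) z⟩` is `fderiv ℝ (fun x => fderiv ℝ U x z) u z`. -/
theorem viscous_layer_subset_entropy_set {N : ℕ}
    (f : EuclideanSpace ℝ (Fin N) → EuclideanSpace ℝ (Fin N))
    (U F : EuclideanSpace ℝ (Fin N) → ℝ)
    (hf : ContDiff ℝ 1 f) (hU : ContDiff ℝ 2 U) (hF : ContDiff ℝ 2 F)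
    (hEP : ∀ u w, fderiv ℝ F u w = fderiv ℝ U u (fderiv ℝ f u w))
    (hconv : ∀ u w, 0 ≤ fderiv ℝ (fun x => fderiv ℝ U x w) u w)
    (uB vinf : EuclideanSpace ℝ (Fin N)) (v : ℝ → EuclideanSpace ℝ (Fin N))
    (hv0 : v 0 = uB)
    (hv : ∀ y : ℝ, 0 ≤ y → HasDerivAt v (f (v y) - f vinf) y)
    (hlim : Tendsto v atTop (nhds vinf)) :
    F vinf - F uB - fderiv ℝ U uB (f vinf - f uB) ≤ 0 := by
  have hU1 : ContDiff ℝ 1 (fderiv ℝ U) := hU.fderiv_right (by norm_num)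
  have hUdiff : Differentiable ℝ U := hU.differentiable (by norm_num)
  have hU'diff : Differentiable ℝ (fderiv ℝ U) := hU1.differentiable (by norm_num)
  have hFdiff : Differentiable ℝ F := hF.differentiable (by norm_num)
  have hfdiff : Differentiable ℝ f := hf.differentiable (by norm_num)
  set g : ℝ → ℝ := fun y =>
    F vinf - F (v y) - fderiv ℝ U (v y) (f vinf - f (v y)) with hg_def
  -- the derivative of g
  have hgderiv : ∀ y : ℝ, 0 ≤ y → HasDerivAt g
      (fderiv ℝ (fderiv ℝ U) (v y) (f (v y) - f vinf) (f (v y) - f vinf)) y := by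
    intro y hy
    set p := v y with hp
    set d : EuclideanSpace ℝ (Fin N) := f p - f vinf with hd
    have hvd : HasDerivAt v d y := hv y hy
    have hFd : HasDerivAt (fun y => F (v y)) (fderiv ℝ F p d) y :=
      (hFdiff p).hasFDerivAt.comp_hasDerivAt y hvd
    have hU'd : HasDerivAt (fun y => fderiv ℝ U (v y))
        (fderiv ℝ (fderiv ℝ U) p d) y :=
      (hU'diff p).hasFDerivAt.comp_hasDerivAt y hvd
    have hwd : HasDerivAt (fun y => f vinf - f (v y)) (-(fderiv ℝ f p d)) y := by
      have h := (hasDerivAt_const y (f vinf)).sub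
        ((hfdiff p).hasFDerivAt.comp_hasDerivAt y hvd)
      rw [zero_sub] at h
      exact h
    have hpair : HasDerivAt (fun y => fderiv ℝ U (v y) (f vinf - f (v y)))
        (fderiv ℝ (fderiv ℝ U) p d (f vinf - f p) + fderiv ℝ U p (-(fderiv ℝ f p d))) y :=
      hU'd.clm_apply hwd
    have := ((hasDerivAt_const y (F vinf)).sub hFd).sub hpair
    have hval : 0 - fderiv ℝ F p d -
        (fderiv ℝ (fderiv ℝ U) p d (f vinf - f p) + fderiv ℝ U p (-(fderiv ℝ f p d)))
        = fderiv ℝ (fderiv ℝ U) p d (f p - f vinf) := by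
      rw [hEP p d]
      have h1 : f vinf - f p = -(f p - f vinf) := by abel
      rw [h1, map_neg, map_neg]
      ring
    rw [hval] at this
    exact this
  -- nonnegativity of the derivative, via the convexity hypothesis
  have hbridge : ∀ u z, fderiv ℝ (fun x => fderiv ℝ U x z) u z
      = fderiv ℝ (fderiv ℝ U) u z z := by
    intro u z
    have h1 : HasFDerivAt (fun x => fderiv ℝ U x z)
        ((fderiv ℝ (fderiv ℝ U) u).flip z) u := by
      simpa using (hU'diff u).hasFDerivAt.clm_apply (hasFDerivAt_const z u)
    rw [h1.fderiv]
    rfl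
  have hderiv_nonneg : ∀ y : ℝ, 0 ≤ y →
      0 ≤ fderiv ℝ (fderiv ℝ U) (v y) (f (v y) - f vinf) (f (v y) - f vinf) := by
    intro y hy
    have := hconv (v y) (f (v y) - f vinf)
    rwa [hbridge] at this
  -- g is monotone on [0, ∞)
  have hmono : MonotoneOn g (Set.Ici (0 : ℝ)) := by
    apply monotoneOn_of_deriv_nonneg (convex_Ici 0)
    · intro y hy
      exact (hgderiv y hy).continuousAt.continuousWithinAt
    · intro y hy
      rw [interior_Ici] at hy
      exact (hgderiv y (le_of_lt hy)).differentiableAt.differentiableWithinAt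
    · intro y hy
      rw [interior_Ici] at hy
      rw [(hgderiv y (le_of_lt hy)).deriv]
      exact hderiv_nonneg y (le_of_lt hy)
  -- g tends to 0 at infinity
  have hφcont : ContinuousAt (fun u => F vinf - F u - fderiv ℝ U u (f vinf - f u)) vinf := by
    apply ContinuousAt.sub
    · exact (continuousAt_const).sub hFdiff.continuous.continuousAt
    · exact (hU'diff.continuous.clm_apply
        (continuous_const.sub hfdiff.continuous)).continuousAt
    -- continuity of the CLM application
  have hglim : Tendsto g atTop (nhds 0) := by
    have : Tendsto g atTop (nhds (F vinf - F vinf - fderiv ℝ U vinf (f vinf - f vinf))) :=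
      hφcont.tendsto.comp hlim
    simpa using this
  -- conclude
  have hle : ∀ᶠ y in atTop, g 0 ≤ g y := by
    filter_upwards [eventually_ge_atTop (0 : ℝ)] with y hy
    exact hmono (Set.self_mem_Ici) hy hy
  have : g 0 ≤ 0 := ge_of_tendsto hglim hle
  simpa [hg_def, hv0] using this
end

section
/- (Proposition 3.10: the discrete boundary-layer set is contained in the discrete entropy set.) Let f : ℝ^N → ℝ^N, let g : ℝ^N × ℝ^N → ℝ^N be a numerical flux, let F : ℝ^N → ℝ be continuous, let G : ℝ^N × ℝ^N → ℝ be a continuous numerical entropy flux consistent with F, i.e. G(w,w) = F(w) for all w, and let U : ℝ^N → ℝ and λ > 0 be such that the discrete entropy inequality holds: for all a, b, c ∈ ℝ^N, U( b − λ( g(b,c) − g(a,b) ) ) − U(b) + λ ( G(b,c) − G(a,b) ) ≤ 0. Suppose v : ℕ → ℝ^N satisfies g(v(n), v(n+1)) = f(v_∞) for all n ≥ 0, v(0) = u_B, and v(n) → v_∞ as n → ∞. Then G(u_B, v(1)) ≥ F(v_∞). -/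
open Filter

/-- Proposition 3.10: for a conservative difference scheme with
numerical flux `g` satisfying the discrete entropy inequality for `(U, G)`, with
`G` a continuous numerical entropy flux consistent with `F`, any solution of the
discrete boundary layer equation `g(v(n), v(n+1)) = f(v_∞)`, `v(0) = u_B`,
`v(n) → v_∞` satisfies the discrete boundary entropy inequality
`G(u_B, v(1)) ≥ F(v_∞)`. -/
theorem discrete_layer_subset_entropy_set {N : ℕ}
    (f : EuclideanSpace ℝ (Fin N) → EuclideanSpace ℝ (Fin N))
    (g : EuclideanSpace ℝ (Fin N) → EuclideanSpace ℝ (Fin N) → EuclideanSpace ℝ (Fin N))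
    (F : EuclideanSpace ℝ (Fin N) → ℝ) (hF : Continuous F)
    (G : EuclideanSpace ℝ (Fin N) → EuclideanSpace ℝ (Fin N) → ℝ)
    (hG : Continuous fun p : EuclideanSpace ℝ (Fin N) × EuclideanSpace ℝ (Fin N) => G p.1 p.2)
    (hGF : ∀ w, G w w = F w)
    (U : EuclideanSpace ℝ (Fin N) → ℝ) (lam : ℝ) (hlam : 0 < lam)
    (hent : ∀ a b c : EuclideanSpace ℝ (Fin N),
      U (b - lam • (g b c - g a b)) - U b + lam * (G b c - G a b) ≤ 0)
    (uB vinf : EuclideanSpace ℝ (Fin N)) (v : ℕ → EuclideanSpace ℝ (Fin N))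
    (hlayer : ∀ n : ℕ, g (v n) (v (n + 1)) = f vinf)
    (hv0 : v 0 = uB)
    (hlim : Tendsto v atTop (nhds vinf)) :
    F vinf ≤ G uB (v 1) := by
  set a : ℕ → ℝ := fun n => G (v n) (v (n + 1)) with ha
  have hmono : ∀ n, a (n + 1) ≤ a n := by
    intro n
    have h := hent (v n) (v (n + 1)) (v (n + 2))
    have hz : g (v (n + 1)) (v (n + 2)) - g (v n) (v (n + 1)) = 0 := by
      rw [hlayer, hlayer]; simp
    rw [hz, smul_zero, sub_zero, sub_self, zero_add] at h
    have hGle : G (v (n + 1)) (v (n + 2)) - G (v n) (v (n + 1)) ≤ 0 := by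
      nlinarith
    simpa [ha] using hGle
  have hanti : Antitone a := antitone_nat_of_succ_le hmono
  have htend : Tendsto a atTop (nhds (F vinf)) := by
    have h1 : Tendsto (fun n => (v n, v (n + 1))) atTop (nhds (vinf, vinf)) :=
      ((hlim.prodMk (hlim.comp (tendsto_add_atTop_nat 1))).mono_right
        (nhds_prod_eq (x := vinf) (y := vinf)).ge)
    have := hG.continuousAt.tendsto.comp h1
    simpa [hGF, ha, Function.comp_def] using this
  have : F vinf ≤ a 0 :=
    le_of_tendsto htend (Eventually.of_forall fun n => hanti (Nat.zero_le n))
  simpa [ha, hv0] using this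
end

section
/- (Theorem 4.1, entropy set, supercritical boundary data.) Let f : ℝ → ℝ be C² with f''(u) > 0 for every u, let u_* satisfy f'(u_*) = 0, let u_B > u_*, and let u_B^* < u_* satisfy f(u_B^*) = f(u_B). Then the set E^entropy(u_B) = { u₀ ∈ ℝ : F(u_B) + U'(u_B)·(f(u₀) − f(u_B)) ≥ F(u₀) for every convex entropy pair (U,F) } equals (−∞, u_B^*] ∪ {u_B}. -/
open Set Filter intervalIntegral


lemma maxpow_hasDerivAt (d : ℝ) (n : ℕ) (hn : 2 ≤ n) (x : ℝ) :
    HasDerivAt (fun u => max (u - d) 0 ^ n) (n * max (x - d) 0 ^ (n - 1)) x := by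
  rcases lt_trichotomy x d with h | h | h
  · have hx : max (x - d) 0 = 0 := max_eq_right (by linarith)
    have h0 : (n : ℝ) * max (x - d) 0 ^ (n - 1) = 0 := by
      rw [hx, zero_pow (by omega : n - 1 ≠ 0)]; ring
    rw [h0]
    refine (hasDerivAt_const x (0:ℝ)).congr_of_eventuallyEq ?_
    filter_upwards [Iio_mem_nhds h] with u hu
    rw [max_eq_right (by simpa using (le_of_lt (mem_Iio.mp hu)) : u - d ≤ 0)]
    rw [zero_pow (by omega : n ≠ 0)]
  · subst h
    have hx : max (x - x) 0 = 0 := by simp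
    have h0 : (n : ℝ) * max (x - x) 0 ^ (n - 1) = 0 := by
      rw [hx, zero_pow (by omega : n - 1 ≠ 0)]; ring
    rw [h0, hasDerivAt_iff_tendsto_slope]
    apply squeeze_zero_norm (a := fun u => |u - x| ^ (n - 1))
    · intro u
      have h1 : max (u - x) 0 ≤ |u - x| := max_le (le_abs_self _) (abs_nonneg _)
      have h2 : (0:ℝ) ≤ max (u - x) 0 := le_max_right _ _
      have hval : slope (fun u => max (u - x) 0 ^ n) x u
          = max (u - x) 0 ^ n / (u - x) := by
        simp [slope, hx, zero_pow (by omega : n ≠ 0)]; ring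
      rw [hval]
      rcases eq_or_ne u x with rfl | hux
      · simp [zero_pow (by omega : n - 1 ≠ 0)]
      · have hux' : (0:ℝ) < |u - x| := abs_pos.mpr (sub_ne_zero.mpr hux)
        have : ‖max (u - x) 0 ^ n / (u - x)‖ = max (u - x) 0 ^ n / |u - x| := by
          rw [norm_div, Real.norm_eq_abs, Real.norm_eq_abs,
            abs_of_nonneg (pow_nonneg h2 n)]
        rw [this]
        have hle : max (u - x) 0 ^ n ≤ |u - x| ^ n := pow_le_pow_left₀ h2 h1 n
        have heq : |u - x| ^ n / |u - x| = |u - x| ^ (n - 1) := by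
          rw [show n = (n-1) + 1 by omega, pow_succ]
          field_simp
          simp
        calc max (u - x) 0 ^ n / |u - x| ≤ |u - x| ^ n / |u - x| := by gcongr
          _ = |u - x| ^ (n - 1) := heq
    · have hc : Tendsto (fun u : ℝ => |u - x| ^ (n - 1)) (nhds x)
          (nhds (|x - x| ^ (n - 1))) := by
        exact (((continuous_id.sub continuous_const).abs.pow (n-1)).tendsto x)
      simp only [sub_self, abs_zero, zero_pow (by omega : n - 1 ≠ 0)] at hc
      exact hc.mono_left nhdsWithin_le_nhds
  · have hev : (fun u : ℝ => max (u - d) 0 ^ n) =ᶠ[nhds x] fun u => (u - d) ^ n := by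
      filter_upwards [Ioi_mem_nhds h] with u hu
      rw [max_eq_left (by linarith [mem_Ioi.mp hu] : (0:ℝ) ≤ u - d)]
    have hx : max (x - d) 0 = x - d := max_eq_left (by linarith)
    have hd : HasDerivAt (fun u : ℝ => (u - d) ^ n) ((n : ℝ) * (x - d) ^ (n - 1)) x := by
      have := ((hasDerivAt_id x).sub_const d).pow n
      simp at this; exact this
    rw [hx]
    exact hd.congr_of_eventuallyEq hev

lemma cutoff_deriv (d : ℝ) :
    deriv (fun u => max (u - d) 0 ^ 3) = fun u => 3 * max (u - d) 0 ^ 2 := by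
  funext u
  have h := (maxpow_hasDerivAt d 3 (by norm_num) u).deriv
  rw [h]; norm_num

lemma cutoff_deriv2 (d : ℝ) :
    deriv (deriv (fun u => max (u - d) 0 ^ 3)) = fun u => 6 * max (u - d) 0 := by
  rw [cutoff_deriv]
  funext u
  have h := ((maxpow_hasDerivAt d 2 le_rfl u).const_mul 3).deriv
  rw [h]; norm_num; ring

lemma cutoff_contDiff (d : ℝ) : ContDiff ℝ 2 (fun u => max (u - d) 0 ^ 3) := by
  have h2 : (2 : WithTop ℕ∞) = 1 + 1 := by norm_num
  rw [h2, contDiff_succ_iff_deriv]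
  refine ⟨fun u => (maxpow_hasDerivAt d 3 (by norm_num) u).differentiableAt, by simp, ?_⟩
  rw [contDiff_one_iff_deriv]
  constructor
  · rw [cutoff_deriv]
    exact fun u => ((maxpow_hasDerivAt d 2 le_rfl u).const_mul 3).differentiableAt
  · rw [cutoff_deriv2]
    exact continuous_const.mul ((continuous_id.sub continuous_const).max continuous_const)

lemma cutoff_pair (f : ℝ → ℝ) (hfc' : Continuous (deriv f)) (d : ℝ) :
    ∃ U F : ℝ → ℝ, ContDiff ℝ 2 U ∧ (∀ u, 0 ≤ deriv (deriv U) u) ∧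
      Differentiable ℝ F ∧ (∀ u, deriv F u = deriv U u * deriv f u) ∧
      (∀ u, deriv U u = 3 * max (u - d) 0 ^ 2) ∧
      (∀ u, F u = ∫ s in d..u, 3 * max (s - d) 0 ^ 2 * deriv f s) := by
  set g : ℝ → ℝ := fun s => 3 * max (s - d) 0 ^ 2 * deriv f s with hg
  have hgc : Continuous g :=
    (continuous_const.mul (((continuous_id.sub continuous_const).max continuous_const).pow 2)).mul hfc'
  refine ⟨fun u => max (u - d) 0 ^ 3, fun u => ∫ s in d..u, g s,
    cutoff_contDiff d, ?_, ?_, ?_, ?_, fun u => rfl⟩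
  · intro u
    rw [cutoff_deriv2]
    positivity
  · exact fun u => ((hgc.integral_hasStrictDerivAt d u).hasDerivAt).differentiableAt
  · intro u
    rw [Continuous.deriv_integral g hgc d u, cutoff_deriv]
  · intro u
    rw [cutoff_deriv]


def entropySet (f : ℝ → ℝ) (uB : ℝ) : Set ℝ :=
  { u₀ : ℝ | ∀ U F : ℝ → ℝ, ContDiff ℝ 2 U → (∀ u, 0 ≤ deriv (deriv U) u) →
      Differentiable ℝ F → (∀ u, deriv F u = deriv U u * deriv f u) →
      F u₀ ≤ F uB + deriv U uB * (f u₀ - f uB) }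

/-- Theorem 4.1, entropy set, supercritical boundary data: for a
strictly convex C² flux `f`, critical point `u_*`, boundary datum `u_B > u_*`
and `u_B^* < u_*` with `f(u_B^*) = f(u_B)`, the entropy admissible set equals
`(−∞, u_B^*] ∪ {u_B}`. -/
theorem entropySet_eq_of_supercritical
    (f : ℝ → ℝ) (hf : ContDiff ℝ 2 f) (hf'' : ∀ u, 0 < deriv (deriv f) u)
    (ustar : ℝ) (hstar : deriv f ustar = 0)
    (uB : ℝ) (huB : ustar < uB)
    (uBstar : ℝ) (huBstar : uBstar < ustar) (hfeq : f uBstar = f uB) :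
    entropySet f uB = Set.Iic uBstar ∪ {uB} := by
  have hfd : Differentiable ℝ f := hf.differentiable (by norm_num)
  have hfc' : Continuous (deriv f) := hf.continuous_deriv one_le_two
  have hsm : StrictMono (deriv f) := strictMono_of_deriv_pos hf''
  have f'neg : ∀ s, s < ustar → deriv f s < 0 := fun s hs => hstar ▸ hsm hs
  have f'pos : ∀ s, ustar < s → 0 < deriv f s := fun s hs => hstar ▸ hsm hs
  have f'nonneg : ∀ s, ustar ≤ s → 0 ≤ deriv f s := fun s hs => hstar ▸ hsm.monotone hs
  have f'nonpos : ∀ s, s ≤ ustar → deriv f s ≤ 0 := fun s hs => hstar ▸ hsm.monotone hs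
  have ftcf : ∀ a b : ℝ, ∫ s in a..b, deriv f s = f b - f a := fun a b =>
    integral_deriv_eq_sub (fun x _ => hfd x) (hfc'.intervalIntegrable _ _)
  have hanti : StrictAntiOn f (Iic ustar) :=
    strictAntiOn_of_deriv_neg (convex_Iic _) hfd.continuous.continuousOn
      (fun x hx => f'neg x (by rwa [interior_Iic, mem_Iio] at hx))
  have hmono : StrictMonoOn f (Ici ustar) :=
    strictMonoOn_of_deriv_pos (convex_Ici _) hfd.continuous.continuousOn
      (fun x hx => f'pos x (by rwa [interior_Ici, mem_Ioi] at hx))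
  ext u₀
  constructor
  · -- forward inclusion
    intro hmem
    by_contra hcon
    simp only [Set.mem_union, Set.mem_Iic, Set.mem_singleton_iff, not_or, not_le] at hcon
    obtain ⟨hu₀, hne⟩ := hcon
    rcases lt_or_gt_of_ne hne with hlt | hgt
    · -- uBstar < u₀ < uB : construct violating pair
      have hfu₀B : f u₀ < f uB := by
        rcases le_or_gt u₀ ustar with h | h
        · calc f u₀ < f uBstar := hanti (le_trans (le_of_lt huBstar) (le_refl _) |>.trans (le_refl _) |> fun _ => by exact (le_of_lt huBstar) : uBstar ∈ Iic ustar) h hu₀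
            _ = f uB := hfeq
        · exact hmono (le_of_lt h) (le_of_lt huB) hlt
      have hfmin : f ustar ≤ f u₀ := by
        rcases le_or_gt u₀ ustar with h | h
        · rcases eq_or_lt_of_le h with rfl | h'
          · exact le_refl _
          · exact le_of_lt (hanti h self_mem_Iic h')
        · exact le_of_lt (hmono self_mem_Ici (le_of_lt h) h)
      -- choose d with ustar < d < uB and f u₀ < f d via IVT
      have hv : (f u₀ + f uB) / 2 ∈ Ioo (f ustar) (f uB) := by
        constructor <;> [linarith; linarith]
      obtain ⟨d, hd, hfdv⟩ := intermediate_value_Ioo (le_of_lt huB)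
        hfd.continuous.continuousOn hv
      have hfu₀d : f u₀ < f d := by rw [hfdv]; linarith
      have hu₀d : u₀ < d := by
        by_contra hh
        push_neg at hh
        have : f d ≤ f u₀ := hmono.monotoneOn (le_of_lt hd.1) (le_trans (le_of_lt hd.1) hh) hh
        linarith
      obtain ⟨U, F, hU, hU'', hF, hF', hUd, hFd⟩ := cutoff_pair f hfc' d
      have hineq := hmem U F hU hU'' hF hF'
      -- F u₀ = 0
      have hFu₀ : F u₀ = 0 := by
        rw [hFd]
        rw [intervalIntegral.integral_congr (g := fun _ => (0:ℝ)) ?_, intervalIntegral.integral_zero]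
        intro s hs
        rw [Set.uIcc_of_ge (le_of_lt hu₀d)] at hs
        have : s - d ≤ 0 := by linarith [hs.2]
        simp [max_eq_right this]
      -- F uB bound
      have hFuB : F uB ≤ 3 * (uB - d) ^ 2 * (f uB - f d) := by
        rw [hFd]
        have hle : ∫ s in d..uB, 3 * max (s - d) 0 ^ 2 * deriv f s
            ≤ ∫ s in d..uB, 3 * (uB - d) ^ 2 * deriv f s := by
          apply intervalIntegral.integral_mono_on (le_of_lt hd.2)
          · exact ((continuous_const.mul (((continuous_id.sub continuous_const).max
              continuous_const).pow 2)).mul hfc').intervalIntegrable _ _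
          · exact (continuous_const.mul hfc').intervalIntegrable _ _
          · intro s hs
            have h1 : max (s - d) 0 ≤ uB - d := max_le (by linarith [hs.2]) (by linarith [hd.2, hs.1])
            have h2 : (0:ℝ) ≤ max (s - d) 0 := le_max_right _ _
            have h3 : 0 ≤ deriv f s := f'nonneg s (le_trans (le_of_lt hd.1) hs.1)
            have h4 : max (s - d) 0 ^ 2 ≤ (uB - d) ^ 2 := pow_le_pow_left₀ h2 h1 2
            nlinarith
        calc (∫ s in d..uB, 3 * max (s - d) 0 ^ 2 * deriv f s)
            ≤ ∫ s in d..uB, 3 * (uB - d) ^ 2 * deriv f s := hle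
          _ = 3 * (uB - d) ^ 2 * (f uB - f d) := by
              rw [intervalIntegral.integral_const_mul, ftcf]
      have hUuB : deriv U uB = 3 * (uB - d) ^ 2 := by
        rw [hUd uB, max_eq_left (by linarith [hd.2] : (0:ℝ) ≤ uB - d)]
      rw [hFu₀, hUuB] at hineq
      have hsq : 0 < (uB - d) ^ 2 := pow_pos (by linarith [hd.2]) 2
      nlinarith
    · -- u₀ > uB
      obtain ⟨U, F, hU, hU'', hF, hF', hUd, hFd⟩ := cutoff_pair f hfc' uB
      have hineq := hmem U F hU hU'' hF hF'
      have hFuB : F uB = 0 := by rw [hFd, intervalIntegral.integral_same]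
      have hUuB : deriv U uB = 0 := by rw [hUd uB]; simp
      have hFu₀ : 0 < F u₀ := by
        rw [hFd]
        apply intervalIntegral.intervalIntegral_pos_of_pos_on
        · exact ((continuous_const.mul (((continuous_id.sub continuous_const).max
            continuous_const).pow 2)).mul hfc').intervalIntegrable _ _
        · intro s hs
          have h1 : 0 < s - uB := by linarith [hs.1]
          have h2 : max (s - uB) 0 = s - uB := max_eq_left (le_of_lt h1)
          have h3 : 0 < deriv f s := f'pos s (by linarith)
          rw [h2]
          exact mul_pos (mul_pos (by norm_num) (pow_pos h1 2)) h3
        · exact hgt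
      rw [hFuB, hUuB] at hineq
      linarith
  · -- backward inclusion
    intro hmem
    rcases hmem with h | h
    · -- u₀ ≤ uBstar
      rw [Set.mem_Iic] at h
      intro U F hU hU'' hF hF'
      have h2 : (2 : WithTop ℕ∞) = 1 + 1 := by norm_num
      rw [h2, contDiff_succ_iff_deriv] at hU
      have hU1 : ContDiff ℝ 1 (deriv U) := hU.2.2
      have hU'c : Continuous (deriv U) := hU1.continuous
      have hUmono : Monotone (deriv U) :=
        monotone_of_deriv_nonneg (hU1.differentiable one_ne_zero) hU''
      have hfBu₀ : f uB ≤ f u₀ := by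
        rcases eq_or_lt_of_le h with rfl | h'
        · exact le_of_eq hfeq.symm
        · exact hfeq ▸ le_of_lt (hanti (by simp [Set.mem_Iic]; linarith)
            (by simp [Set.mem_Iic]; linarith [huBstar]) h')
      set a := deriv U ustar with ha
      have hint : ∀ p q : ℝ, IntervalIntegrable (fun s => deriv U s * deriv f s) MeasureTheory.volume p q :=
        fun p q => (hU'c.mul hfc').intervalIntegrable _ _
      have hFTC : ∫ s in u₀..uB, deriv U s * deriv f s = F uB - F u₀ := by
        have hdF : deriv F = fun u => deriv U u * deriv f u := funext hF'
        have := integral_deriv_eq_sub (f := F) (a := u₀) (b := uB)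
          (fun x _ => hF x) (by rw [hdF]; exact hint _ _)
        rw [hdF] at this
        exact this
      have hI1 : a * (f ustar - f u₀) ≤ ∫ s in u₀..ustar, deriv U s * deriv f s := by
        have : ∫ s in u₀..ustar, a * deriv f s ≤ ∫ s in u₀..ustar, deriv U s * deriv f s := by
          apply intervalIntegral.integral_mono_on (by linarith)
          · exact (continuous_const.mul hfc').intervalIntegrable _ _
          · exact hint _ _
          · intro s hs
            exact mul_le_mul_of_nonpos_right (hUmono hs.2) (f'nonpos s hs.2)
        rwa [intervalIntegral.integral_const_mul, ftcf] at this
      have hI2 : a * (f uB - f ustar) ≤ ∫ s in ustar..uB, deriv U s * deriv f s := by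
        have : ∫ s in ustar..uB, a * deriv f s ≤ ∫ s in ustar..uB, deriv U s * deriv f s := by
          apply intervalIntegral.integral_mono_on (le_of_lt huB)
          · exact (continuous_const.mul hfc').intervalIntegrable _ _
          · exact hint _ _
          · intro s hs
            exact mul_le_mul_of_nonneg_right (hUmono hs.1) (f'nonneg s hs.1)
        rwa [intervalIntegral.integral_const_mul, ftcf] at this
      have hadd : (∫ s in u₀..ustar, deriv U s * deriv f s)
          + ∫ s in ustar..uB, deriv U s * deriv f s
          = ∫ s in u₀..uB, deriv U s * deriv f s :=
        intervalIntegral.integral_add_adjacent_intervals (hint _ _) (hint _ _)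
      have hac : a ≤ deriv U uB := hUmono (le_of_lt huB)
      have hkey : deriv U uB * (f uB - f u₀) ≤ F uB - F u₀ := by
        have h1 : a * (f uB - f u₀) ≤ F uB - F u₀ := by
          rw [← hFTC, ← hadd]; linarith
        have h2 : deriv U uB * (f uB - f u₀) ≤ a * (f uB - f u₀) :=
          mul_le_mul_of_nonpos_right hac (by linarith)
        linarith
      nlinarith
    · -- u₀ = uB
      rw [Set.mem_singleton_iff] at h
      subst h
      intro U F _ _ _ _
      simp
end

section
/- (Theorem 4.1, entropy set, subcritical boundary data.) Let f : ℝ → ℝ be C² with f''(u) > 0 for every u, let u_* satisfy f'(u_*) = 0, and let u_B ≤ u_*. Then the set E^entropy(u_B) = { u₀ ∈ ℝ : F(u_B) + U'(u_B)·(f(u₀) − f(u_B)) ≥ F(u₀) for every convex entropy pair (U,F) } equals (−∞, u_*]. -/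
open intervalIntegral MeasureTheory

private lemma hasDerivAt_maxsq (x : ℝ) :
    HasDerivAt (fun y : ℝ => max y 0 ^ 2) (2 * max x 0) x := by
  rcases lt_trichotomy x 0 with hx | rfl | hx
  · have h0 : max x 0 = 0 := max_eq_right hx.le
    rw [h0, mul_zero]
    apply (hasDerivAt_const x (0 : ℝ)).congr_of_eventuallyEq
    filter_upwards [eventually_lt_nhds hx] with y hy
    simp [max_eq_right hy.le]
  · simp only [max_self, mul_zero]
    rw [hasDerivAt_iff_tendsto_slope]
    apply squeeze_zero_norm' (a := fun y : ℝ => |y|)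
    · filter_upwards [self_mem_nhdsWithin] with y hy
      have hy0 : y ≠ 0 := hy
      have h2 : max y 0 ≤ |y| := max_le (le_abs_self y) (abs_nonneg y)
      have h1 : max y 0 ^ 2 ≤ |y| ^ 2 := by nlinarith [le_max_right y 0, abs_nonneg y]
      rw [slope_def_field]
      simp only [sub_zero, max_self]
      rw [Real.norm_eq_abs, abs_div]
      rw [div_le_iff₀ (abs_pos.mpr hy0)]
      have h3 : |(y ⊔ 0) ^ 2 - 0 ^ 2| = (y ⊔ 0) ^ 2 := by
        rw [show ((0:ℝ) ^ 2) = 0 by norm_num, sub_zero]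
        exact abs_of_nonneg (sq_nonneg _)
      rw [h3]
      nlinarith [sq_abs y]
    · exact (continuous_abs.tendsto' 0 0 abs_zero).mono_left nhdsWithin_le_nhds
  · have h := hasDerivAt_pow 2 x
    norm_num at h
    have h' : HasDerivAt (fun y : ℝ => max y 0 ^ 2) (2 * x) x := by
      apply h.congr_of_eventuallyEq
      filter_upwards [eventually_gt_nhds hx] with y hy
      simp [max_eq_left hy.le]
    rwa [max_eq_left hx.le]

/-- Theorem 4.1, entropy set, subcritical boundary data: for a
strictly convex C² flux `f`, critical point `u_*` and boundary datum
`u_B ≤ u_*`, the entropy admissible set equals `(−∞, u_*]`. -/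
theorem entropySet_eq_of_subcritical
    (f : ℝ → ℝ) (hf : ContDiff ℝ 2 f) (hf'' : ∀ u, 0 < deriv (deriv f) u)
    (ustar : ℝ) (hstar : deriv f ustar = 0)
    (uB : ℝ) (huB : uB ≤ ustar) :
    entropySet f uB = Set.Iic ustar := by
  have hf'c : Continuous (deriv f) := hf.continuous_deriv one_le_two
  have hf'mono : StrictMono (deriv f) := strictMono_of_deriv_pos hf''
  have hf'nonpos : ∀ s, s ≤ ustar → deriv f s ≤ 0 := by
    intro s hs
    have := hf'mono.monotone hs
    rwa [hstar] at this
  ext u₀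
  simp only [entropySet, Set.mem_setOf_eq, Set.mem_Iic]
  constructor
  · -- if u₀ is admissible then u₀ ≤ ustar; by contradiction
    intro h
    by_contra hgt
    push_neg at hgt
    set q : ℝ → ℝ := fun s => max (s - ustar) 0 ^ 2 with hq
    have hqc : Continuous q := ((continuous_id.sub continuous_const).max continuous_const).pow 2
    have hqd : ∀ x, HasDerivAt q (2 * max (x - ustar) 0) x := by
      intro x
      have h1 : HasDerivAt (fun y : ℝ => y - ustar) 1 x := (hasDerivAt_id x).sub_const ustar
      have := (hasDerivAt_maxsq (x - ustar)).comp x h1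
      rw [mul_one] at this
      exact this
    have hqderiv : deriv q = fun x => 2 * max (x - ustar) 0 := funext fun x => (hqd x).deriv
    set U : ℝ → ℝ := fun u => ∫ s in ustar..u, q s with hUdef
    set G : ℝ → ℝ := fun u => ∫ s in ustar..u, q s * deriv f s with hGdef
    have hgc : Continuous fun s => q s * deriv f s := hqc.mul hf'c
    have hUd : ∀ x, HasDerivAt U (q x) x := fun x =>
      intervalIntegral.integral_hasDerivAt_right (hqc.intervalIntegrable _ _)
        (hqc.stronglyMeasurableAtFilter _ _) hqc.continuousAt
    have hGd : ∀ x, HasDerivAt G (q x * deriv f x) x := fun x =>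
      intervalIntegral.integral_hasDerivAt_right (hgc.intervalIntegrable _ _)
        (hgc.stronglyMeasurableAtFilter _ _) hgc.continuousAt
    have hUderiv : deriv U = q := funext fun x => (hUd x).deriv
    have hGderiv : ∀ u, deriv G u = deriv U u * deriv f u := by
      intro u; rw [hUderiv, (hGd u).deriv]
    have hU2 : ContDiff ℝ 2 U := by
      rw [show ((2 : WithTop ℕ∞)) = 1 + 1 by norm_num, contDiff_succ_iff_deriv]
      refine ⟨fun x => (hUd x).differentiableAt, by norm_num, ?_⟩
      rw [hUderiv, contDiff_one_iff_deriv]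
      refine ⟨fun x => (hqd x).differentiableAt, ?_⟩
      rw [hqderiv]
      exact continuous_const.mul ((continuous_id.sub continuous_const).max continuous_const)
    have hUconv : ∀ u, 0 ≤ deriv (deriv U) u := by
      intro u
      rw [hUderiv, hqderiv]
      positivity
    have key := h U G hU2 hUconv (fun x => (hGd x).differentiableAt) hGderiv
    -- deriv U uB = 0
    have hqB : q uB = 0 := by
      simp only [hq]
      rw [max_eq_right (by linarith : uB - ustar ≤ 0)]
      norm_num
    have hGB : G uB = 0 := by
      show (∫ s in ustar..uB, q s * deriv f s) = 0
      have : ∀ s ∈ Set.uIcc ustar uB, q s * deriv f s = (fun _ => (0:ℝ)) s := by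
        intro s hs
        rw [Set.uIcc_of_ge huB] at hs
        have : q s = 0 := by
          simp only [hq]
          rw [max_eq_right (by linarith [hs.2] : s - ustar ≤ 0)]
          norm_num
        simp [this]
      rw [intervalIntegral.integral_congr this]
      simp
    have hGpos : 0 < G u₀ := by
      show 0 < ∫ s in ustar..u₀, q s * deriv f s
      apply intervalIntegral.intervalIntegral_pos_of_pos_on
        (hgc.intervalIntegrable _ _) _ hgt
      intro x hx
      have hx1 : 0 < x - ustar := by linarith [hx.1]
      have hfx : 0 < deriv f x := by
        have := hf'mono hx.1
        rwa [hstar] at this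
      have hqx : 0 < q x := by
        simp only [hq]
        rw [max_eq_left hx1.le]
        positivity
      exact mul_pos hqx hfx
    rw [hUderiv, hqB, hGB] at key
    simp at key
    linarith
  · -- if u₀ ≤ ustar then u₀ is admissible
    intro hle U F hU hUconv hF hF'
    have hU'c : Continuous (deriv U) := hU.continuous_deriv one_le_two
    have hU'diff : Differentiable ℝ (deriv U) := by
      have := (contDiff_succ_iff_deriv.mp
        (by rw [show ((2 : WithTop ℕ∞)) = 1 + 1 by norm_num] at hU; exact hU)).2.2
      exact this.differentiable one_ne_zero
    have hU'mono : Monotone (deriv U) := monotone_of_deriv_nonneg hU'diff hUconv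
    have hFderiv : deriv F = fun u => deriv U u * deriv f u := funext hF'
    have hF'c : Continuous (deriv F) := by rw [hFderiv]; exact hU'c.mul hf'c
    have hFsub : ∫ s in uB..u₀, deriv F s = F u₀ - F uB :=
      intervalIntegral.integral_eq_sub_of_hasDerivAt
        (fun x _ => (hF x).hasDerivAt) (hF'c.intervalIntegrable _ _)
    have hfsub : ∫ s in uB..u₀, deriv f s = f u₀ - f uB :=
      intervalIntegral.integral_eq_sub_of_hasDerivAt
        (fun x _ => ((hf.differentiable two_ne_zero) x).hasDerivAt)
        (hf'c.intervalIntegrable _ _)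
    have hkey : ∫ s in uB..u₀, deriv F s ≤ ∫ s in uB..u₀, deriv U uB * deriv f s := by
      rw [hFderiv]
      rcases le_total uB u₀ with hc | hc
      · apply intervalIntegral.integral_mono_on hc
          ((hU'c.mul hf'c).intervalIntegrable _ _)
          ((continuous_const.mul hf'c).intervalIntegrable _ _)
        intro x hx
        have h1 : deriv U uB ≤ deriv U x := hU'mono hx.1
        have h2 : deriv f x ≤ 0 := hf'nonpos x (le_trans hx.2 hle)
        simp only [Pi.mul_apply]
        nlinarith
      · rw [intervalIntegral.integral_symm, intervalIntegral.integral_symm u₀ uB]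
        have : ∫ s in u₀..uB, deriv U uB * deriv f s ≤
            ∫ s in u₀..uB, deriv U s * deriv f s := by
          apply intervalIntegral.integral_mono_on hc
            ((continuous_const.mul hf'c).intervalIntegrable _ _)
            ((hU'c.mul hf'c).intervalIntegrable _ _)
          intro x hx
          have h1 : deriv U x ≤ deriv U uB := hU'mono hx.2
          have h2 : deriv f x ≤ 0 := hf'nonpos x (le_trans hx.2 huB)
          simp only [Pi.mul_apply]
          nlinarith
        linarith
    rw [hFsub] at hkey
    rw [intervalIntegral.integral_const_mul, hfsub] at hkey
    linarith
end

section
/- (Theorem 4.1, viscous boundary-layer set for a convex scalar conservation law.) Let f : ℝ → ℝ be C² with f''(u) > 0 for every u and let u_* satisfy f'(u_*) = 0. For u_B ∈ ℝ define E^layer(u_B) = { v_∞ ∈ ℝ : there exists a differentiable v : [0,∞) → ℝ with v(0) = u_B, v'(y) = f(v(y)) − f(v_∞) for all y ≥ 0, and v(y) → v_∞ as y → ∞ }. If u_B ≤ u_*, then E^layer(u_B) = (−∞, u_*]. If u_B > u_* and u_B^* < u_* satisfies f(u_B^*) = f(u_B), then E^layer(u_B) = (−∞, u_B^*) ∪ {u_B}.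 -/
open Filter

/-- The set of admissible boundary values based on the boundary layer equation
of the vanishing viscosity method: `v_∞` is admissible iff the problem
`v' = f(v) − f(v_∞)`, `v(0) = u_B`, `v(∞) = v_∞` has a solution on `[0,∞)`. -/
def viscousLayerSet (f : ℝ → ℝ) (uB : ℝ) : Set ℝ :=
  { vinf : ℝ | ∃ v : ℝ → ℝ, v 0 = uB ∧
      (∀ y : ℝ, 0 ≤ y → HasDerivAt v (f (v y) - f vinf) y) ∧
      Tendsto v atTop (nhds vinf) }


open Set intervalIntegral

private lemma exists_solution_incr (g : ℝ → ℝ) (hg : Continuous g) {c a b K : ℝ}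
    (hca : c < a) (hab : a < b) (hK : 0 < K)
    (hpos : ∀ v ∈ Ioo c b, 0 < g v)
    (hbound : ∀ v ∈ Icc a b, |g v| ≤ K * (b - v)) :
    ∃ v : ℝ → ℝ, v 0 = a ∧ (∀ y : ℝ, 0 ≤ y → HasDerivAt v (g (v y)) y) ∧
      Tendsto v atTop (nhds b) := by
  classical
  set G : ℝ → ℝ := fun w => ∫ t in a..w, (g t)⁻¹ with hGdef
  have hmemD : a ∈ Ioo c b := ⟨hca, hab⟩
  have hinvcont : ContinuousOn (fun t => (g t)⁻¹) (Ioo c b) :=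
    ContinuousOn.inv₀ hg.continuousOn (fun t ht => (hpos t ht).ne')
  have hint : ∀ w ∈ Ioo c b, IntervalIntegrable (fun t => (g t)⁻¹) MeasureTheory.volume a w := by
    intro w hw
    apply ContinuousOn.intervalIntegrable
    exact hinvcont.mono ((ordConnected_Ioo).uIcc_subset hmemD hw)
  have hGderiv : ∀ w ∈ Ioo c b, HasDerivAt G (g w)⁻¹ w := by
    intro w hw
    exact intervalIntegral.integral_hasDerivAt_right (hint w hw)
      (hinvcont.stronglyMeasurableAtFilter isOpen_Ioo w hw)
      (hinvcont.continuousAt (isOpen_Ioo.mem_nhds hw))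
  have hGcont : ContinuousOn G (Ioo c b) :=
    fun w hw => ((hGderiv w hw).continuousAt).continuousWithinAt
  have hGmono : StrictMonoOn G (Ioo c b) := by
    apply strictMonoOn_of_deriv_pos (convex_Ioo c b) hGcont
    intro w hw
    rw [interior_Ioo] at hw
    rw [(hGderiv w hw).deriv]
    exact inv_pos.2 (hpos w hw)
  have hGa : G a = 0 := intervalIntegral.integral_same
  -- divergence of G near b
  have hGbig : ∀ y : ℝ, ∃ w ∈ Ico a b, y < G w := by
    intro y
    rcases lt_or_ge y 0 with hy | hy
    · exact ⟨a, ⟨le_refl a, hab⟩, by rwa [hGa]⟩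
    · set E := Real.exp (-(K * (y + 1))) with hEdef
      set w := b - (b - a) * E with hwdef
      have hE0 : 0 < E := Real.exp_pos _
      have hE1 : E ≤ 1 := Real.exp_le_one_iff.2 (by nlinarith)
      have hab' : 0 < b - a := sub_pos.2 hab
      have hw1 : a ≤ w := by nlinarith
      have hw2 : w < b := by nlinarith
      have hwmem : w ∈ Ioo c b := ⟨lt_of_lt_of_le hca hw1, hw2⟩
      refine ⟨w, ⟨hw1, hw2⟩, ?_⟩
      have hint1 : IntervalIntegrable (fun t => (K * (b - t))⁻¹) MeasureTheory.volume a w := by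
        apply ContinuousOn.intervalIntegrable
        apply ContinuousOn.inv₀ (Continuous.continuousOn (by continuity))
        intro t ht
        rw [uIcc_of_le hw1] at ht
        have : t < b := lt_of_le_of_lt ht.2 hw2
        exact (mul_pos hK (by linarith)).ne'
      have hcomp : (∫ t in a..w, (K * (b - t))⁻¹) ≤ G w := by
        apply intervalIntegral.integral_mono_on hw1 hint1 (hint w hwmem)
        intro t ht
        have htb : t ∈ Icc a b := ⟨ht.1, (le_trans ht.2 hw2.le)⟩
        have h1 : 0 < g t := hpos t ⟨lt_of_lt_of_le hca ht.1, lt_of_le_of_lt ht.2 hw2⟩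
        have h2 : g t ≤ K * (b - t) := le_trans (le_abs_self _) (hbound t htb)
        exact inv_anti₀ h1 h2
      have hcalc : (∫ t in a..w, (K * (b - t))⁻¹) = K⁻¹ * Real.log ((b - a)/(b - w)) := by
        have e1 : ∀ t : ℝ, (K * (b - t))⁻¹ = K⁻¹ * (b - t)⁻¹ := fun t => by
          rw [mul_inv]
        simp_rw [e1]
        rw [intervalIntegral.integral_const_mul]
        congr 1
        have e2 : (fun t : ℝ => (b - t)⁻¹) = (fun t : ℝ => (fun x : ℝ => x⁻¹) (b - t)) := rfl
        rw [e2, intervalIntegral.integral_comp_sub_left (fun x : ℝ => x⁻¹) b]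
        exact integral_inv_of_pos (by linarith) (by linarith)
      have hval : K⁻¹ * Real.log ((b - a)/(b - w)) = y + 1 := by
        have hbw : b - w = (b - a) * E := by rw [hwdef]; ring
        rw [hbw]
        have : (b - a)/((b - a) * E) = E⁻¹ := by
          field_simp
        rw [this, Real.log_inv, hEdef, Real.log_exp]
        field_simp
      have : y < y + 1 := lt_add_one y
      calc y < y + 1 := this
        _ = _ := hval.symm
        _ = _ := hcalc.symm
        _ ≤ G w := hcomp
  set c' := (c + a) / 2 with hc'def
  have hc'mem : c' ∈ Ioo c b := ⟨by linarith, by linarith⟩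
  have hc'a : c' < a := by linarith
  set L := G c' with hLdef
  have hL : L < 0 := by
    rw [hLdef, ← hGa]
    exact hGmono hc'mem hmemD hc'a
  have hexists : ∀ y ∈ Ioi L, ∃ w ∈ Ioo c b, G w = y := by
    intro y hy
    obtain ⟨w₁, hw₁, hw₁y⟩ := hGbig y
    have hc'w₁ : c' ≤ w₁ := le_trans hc'a.le hw₁.1
    have hsub : Icc c' w₁ ⊆ Ioo c b :=
      fun t ht => ⟨lt_of_lt_of_le hc'mem.1 ht.1, lt_of_le_of_lt ht.2 hw₁.2⟩
    have hmem : y ∈ Icc (G c') (G w₁) := ⟨le_of_lt hy, hw₁y.le⟩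
    obtain ⟨w, hw, hwy⟩ := intermediate_value_Icc hc'w₁ (hGcont.mono hsub) hmem
    exact ⟨w, hsub hw, hwy⟩
  set v : ℝ → ℝ := fun y => if h : ∃ w ∈ Ioo c b, G w = y then h.choose else b with hvdef
  have hvspec : ∀ y ∈ Ioi L, v y ∈ Ioo c b ∧ G (v y) = y := by
    intro y hy
    have h := hexists y hy
    have : v y = h.choose := dif_pos h
    rw [this]
    exact ⟨h.choose_spec.1, h.choose_spec.2⟩
  have huniq : ∀ y ∈ Ioi L, ∀ w ∈ Ioo c b, G w = y → v y = w := by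
    intro y hy w hw hwy
    exact hGmono.injOn (hvspec y hy).1 hw (by rw [(hvspec y hy).2, hwy])
  have hlt1 : ∀ y ∈ Ioi L, ∀ w ∈ Ioo c b, (G w < y ↔ w < v y) := by
    intro y hy w hw
    have h := hGmono.lt_iff_lt hw (hvspec y hy).1
    rwa [(hvspec y hy).2] at h
  have hlt2 : ∀ y ∈ Ioi L, ∀ w ∈ Ioo c b, (y < G w ↔ v y < w) := by
    intro y hy w hw
    have h := hGmono.lt_iff_lt (hvspec y hy).1 hw
    rwa [(hvspec y hy).2] at h
  have hvlt : ∀ y ∈ Ioi L, c' < v y := by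
    intro y hy
    exact (hlt1 y hy c' hc'mem).1 hy
  have hvcont : ∀ y ∈ Ioi L, ContinuousAt v y := by
    intro y hy
    rw [ContinuousAt, tendsto_order]
    constructor
    · intro x hx
      set w := max x c' with hwdef
      have hw : w ∈ Ioo c b :=
        ⟨lt_of_lt_of_le hc'mem.1 (le_max_right _ _),
         lt_of_lt_of_le (max_lt hx (hvlt y hy)) (hvspec y hy).1.2.le⟩
      have hwlt : w < v y := max_lt hx (hvlt y hy)
      have hGw : G w < y := (hlt1 y hy w hw).2 hwlt
      filter_upwards [eventually_gt_nhds (max_lt hGw hy : max (G w) L < y)] with z hz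
      have hz1 : L < z := lt_of_le_of_lt (le_max_right _ _) hz
      have hz2 : G w < z := lt_of_le_of_lt (le_max_left _ _) hz
      exact lt_of_le_of_lt (le_max_left x c') ((hlt1 z hz1 w hw).1 hz2)
    · intro x hx
      set w := min x ((v y + b)/2) with hwdef
      have hvyb : v y < b := (hvspec y hy).1.2
      have hw : w ∈ Ioo c b :=
        ⟨lt_of_lt_of_le (lt_trans (hvspec y hy).1.1 (lt_min hx (by linarith))) le_rfl,
         lt_of_le_of_lt (min_le_right _ _) (by linarith)⟩
      have hwgt : v y < w := lt_min hx (by linarith)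
      have hGw : y < G w := (hlt2 y hy w hw).2 hwgt
      filter_upwards [eventually_lt_nhds hGw, eventually_gt_nhds hy] with z hz1 hz2
      exact lt_of_lt_of_le ((hlt2 z hz2 w hw).1 hz1) (min_le_left _ _)
  have hvderiv : ∀ y ∈ Ioi L, HasDerivAt v (g (v y)) y := by
    intro y hy
    have hw := (hvspec y hy).1
    have h1 : HasDerivAt G (g (v y))⁻¹ (v y) := hGderiv _ hw
    have h2 : (g (v y))⁻¹ ≠ 0 := inv_ne_zero (hpos _ hw).ne'
    have h3 : ∀ᶠ z in nhds y, G (v z) = z := by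
      filter_upwards [eventually_gt_nhds hy] with z hz
      exact (hvspec z hz).2
    have := HasDerivAt.of_local_left_inverse (hvcont y hy) h1 h2 h3
    rwa [inv_inv] at this
  have hvlim : Tendsto v atTop (nhds b) := by
    rw [tendsto_order]
    constructor
    · intro x hx
      set w := max x c' with hwdef
      have hw : w ∈ Ioo c b := ⟨lt_of_lt_of_le hc'mem.1 (le_max_right _ _), max_lt hx hc'mem.2⟩
      filter_upwards [eventually_gt_atTop (max (G w) L)] with z hz
      have hz1 : L < z := lt_of_le_of_lt (le_max_right _ _) hz
      have hz2 : G w < z := lt_of_le_of_lt (le_max_left _ _) hz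
      exact lt_of_le_of_lt (le_max_left x c') ((hlt1 z hz1 w hw).1 hz2)
    · intro x hx
      filter_upwards [eventually_gt_atTop L] with z hz
      exact lt_trans (hvspec z hz).1.2 hx
  exact ⟨v, huniq 0 hL a hmemD hGa,
    fun y hy => hvderiv y (lt_of_lt_of_le hL hy), hvlim⟩

private lemma eq_aux {f : ℝ → ℝ} (hf : ContDiff ℝ 2 f) {C e y0 : ℝ}
    (he : f e = C) (hy0 : 0 ≤ y0)
    {v : ℝ → ℝ} (hv : ∀ y : ℝ, 0 ≤ y → HasDerivAt v (f (v y) - C) y) :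
    (v 0 = e → v y0 = e) ∧ (v y0 = e → v 0 = e) := by
  have hdiff : Differentiable ℝ f := hf.differentiable (by norm_num)
  have hderivcont : Continuous (deriv f) := by
    have h2 : (2 : WithTop ℕ∞) = 1 + 1 := by norm_num
    rw [h2, contDiff_succ_iff_deriv] at hf
    exact hf.2.2.continuous
  have hvc : ContinuousOn v (Icc 0 y0) :=
    fun t ht => ((hv t ht.1).continuousAt).continuousWithinAt
  obtain ⟨B, hB⟩ := (isCompact_Icc.image_of_continuousOn hvc).exists_bound_of_continuousOn
    continuousOn_id
  simp only [mem_image, id_eq, forall_exists_index, and_imp] at hB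
  have hBv : ∀ t ∈ Icc (0:ℝ) y0, |v t| ≤ B := by
    intro t ht
    have := hB (v t) t ht rfl
    rwa [Real.norm_eq_abs] at this
  set m := min (-B) e with hmdef
  set M := max B e with hMdef
  have hem : e ∈ Icc m M := ⟨min_le_right _ _, le_max_right _ _⟩
  have hvm : ∀ t ∈ Icc (0:ℝ) y0, v t ∈ Icc m M := by
    intro t ht
    have := abs_le.1 (hBv t ht)
    exact ⟨le_trans (min_le_left _ _) this.1, le_trans this.2 (le_max_left _ _)⟩
  obtain ⟨C₁, hC₁⟩ := isCompact_Icc.exists_bound_of_continuousOn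
    (hderivcont.continuousOn : ContinuousOn (deriv f) (Icc m M))
  set K : NNReal := ⟨max C₁ 0, le_max_right _ _⟩ with hKdef
  have hlip : LipschitzOnWith K (fun x => f x - C) (Icc m M) := by
    apply (convex_Icc m M).lipschitzOnWith_of_nnnorm_hasDerivWithin_le
      (f' := fun x => deriv f x)
    · intro x hx
      exact ((hdiff x).hasDerivAt.sub_const C).hasDerivWithinAt
    · intro x hx
      have : ‖deriv f x‖ ≤ max C₁ 0 := le_trans (hC₁ x hx) (le_max_left _ _)
      exact_mod_cast this
  constructor
  · intro h0
    have := ODE_solution_unique_of_mem_Icc_right (v := fun _ x => f x - C)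
      (s := fun _ => Icc m M) (K := K) (fun _ _ => hlip) hvc
      (fun t ht => (hv t ht.1).hasDerivWithinAt)
      (fun t ht => hvm t ⟨ht.1, ht.2.le⟩)
      (continuousOn_const : ContinuousOn (fun _ => e) (Icc 0 y0))
      (fun t _ => by
        have : HasDerivWithinAt (fun _ : ℝ => e) 0 (Ici t) t := hasDerivWithinAt_const t _ e
        simpa [he] using this)
      (fun t _ => hem) (by simpa using h0)
    exact this ⟨hy0, le_refl y0⟩
  · intro h0
    have := ODE_solution_unique_of_mem_Icc_left (v := fun _ x => f x - C)
      (s := fun _ => Icc m M) (K := K) (fun _ _ => hlip) hvc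
      (fun t ht => (hv t ht.1.le).hasDerivWithinAt)
      (fun t ht => hvm t ⟨ht.1.le, ht.2⟩)
      (continuousOn_const : ContinuousOn (fun _ => e) (Icc 0 y0))
      (fun t _ => by
        have : HasDerivWithinAt (fun _ : ℝ => e) 0 (Iic t) t := hasDerivWithinAt_const t _ e
        simpa [he] using this)
      (fun t _ => hem) (by simpa using h0)
    exact this ⟨le_refl (0:ℝ), hy0⟩

private lemma stays_below {f : ℝ → ℝ} (hf : ContDiff ℝ 2 f) {C e : ℝ} (he : f e = C)
    {v : ℝ → ℝ} (hv : ∀ y : ℝ, 0 ≤ y → HasDerivAt v (f (v y) - C) y)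
    (h0 : v 0 < e) : ∀ y, 0 ≤ y → v y < e := by
  intro y hy
  rcases lt_trichotomy (v y) e with h | h | h
  · exact h
  · exact absurd ((eq_aux hf he hy hv).2 h) (ne_of_lt h0)
  · exfalso
    have hvc : ContinuousOn v (Icc 0 y) :=
      fun t ht => ((hv t ht.1).continuousAt).continuousWithinAt
    obtain ⟨t, ht, hte⟩ := intermediate_value_Icc hy hvc ⟨h0.le, h.le⟩
    exact absurd ((eq_aux hf he ht.1 hv).2 hte) (ne_of_lt h0)

private lemma stays_above {f : ℝ → ℝ} (hf : ContDiff ℝ 2 f) {C e : ℝ} (he : f e = C)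
    {v : ℝ → ℝ} (hv : ∀ y : ℝ, 0 ≤ y → HasDerivAt v (f (v y) - C) y)
    (h0 : e < v 0) : ∀ y, 0 ≤ y → e < v y := by
  intro y hy
  rcases lt_trichotomy e (v y) with h | h | h
  · exact h
  · exact absurd ((eq_aux hf he hy hv).2 h.symm) (ne_of_gt h0)
  · exfalso
    have hvc : ContinuousOn v (Icc 0 y) :=
      fun t ht => ((hv t ht.1).continuousAt).continuousWithinAt
    obtain ⟨t, ht, hte⟩ := intermediate_value_Icc' hy hvc ⟨h.le, h0.le⟩
    exact absurd ((eq_aux hf he ht.1 hv).2 hte) (ne_of_gt h0)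

private lemma not_mem_above {f : ℝ → ℝ} (hf : ContDiff ℝ 2 f) {ustar uB vinf : ℝ}
    (hmono : StrictMonoOn f (Ici ustar))
    (h1 : ustar < vinf) (h2 : uB < vinf) :
    vinf ∉ viscousLayerSet f uB := by
  rintro ⟨v, hv0, hvd, hvt⟩
  have hbelow : ∀ y, 0 ≤ y → v y < vinf :=
    stays_below hf rfl hvd (by rw [hv0]; exact h2)
  set c := (ustar + vinf)/2 with hcdef
  have hc1 : ustar < c := by rw [hcdef]; linarith
  have hc2 : c < vinf := by rw [hcdef]; linarith
  obtain ⟨y1', hy1'⟩ := eventually_atTop.1 (hvt.eventually (eventually_gt_nhds hc2))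
  set y1 := max y1' 0 with hy1def
  have hy10 : (0:ℝ) ≤ y1 := le_max_right _ _
  have hanti : StrictAntiOn v (Ici y1) := by
    apply strictAntiOn_of_deriv_neg (convex_Ici _)
    · intro t ht
      exact ((hvd t (le_trans hy10 ht)).continuousAt).continuousWithinAt
    · intro t ht
      rw [interior_Ici] at ht
      have ht0 : (0:ℝ) ≤ t := le_trans hy10 ht.le
      rw [(hvd t ht0).deriv]
      have h3 : c < v t := hy1' t (le_trans (le_max_left _ _) ht.le)
      have h4 : v t < vinf := hbelow t ht0
      have h5 : f (v t) < f vinf :=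
        hmono (mem_Ici.2 (le_trans hc1.le h3.le)) (mem_Ici.2 (le_trans hc1.le hc2.le)) h4
      linarith
  have hlast : vinf ≤ v (y1 + 1) := by
    apply le_of_tendsto hvt
    filter_upwards [eventually_ge_atTop (y1 + 1)] with z hz
    rcases eq_or_lt_of_le hz with h | h
    · rw [← h]
    · exact (hanti (mem_Ici.2 (by linarith)) (mem_Ici.2 (le_trans (by linarith) hz)) h).le
  exact absurd hlast (not_le.2 (hbelow (y1 + 1) (by linarith)))

private lemma lip_bound {f : ℝ → ℝ} (hf : ContDiff ℝ 2 f) (p q : ℝ) :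
    ∃ K : ℝ, 0 < K ∧ ∀ z ∈ Icc p q, ∀ w ∈ Icc p q, |f w - f z| ≤ K * |w - z| := by
  have hdiff : Differentiable ℝ f := hf.differentiable (by norm_num)
  have hderivcont : Continuous (deriv f) := by
    have h2 : (2 : WithTop ℕ∞) = 1 + 1 := by norm_num
    rw [h2, contDiff_succ_iff_deriv] at hf
    exact hf.2.2.continuous
  obtain ⟨C₁, hC₁⟩ := isCompact_Icc.exists_bound_of_continuousOn
    (hderivcont.continuousOn : ContinuousOn (deriv f) (Icc p q))
  refine ⟨max C₁ 1, lt_of_lt_of_le one_pos (le_max_right _ _), ?_⟩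
  intro z hz w hw
  have := Convex.norm_image_sub_le_of_norm_deriv_le (f := f) (s := Icc p q) (C := max C₁ 1)
    (fun x _ => hdiff x) (fun x hx => le_trans (hC₁ x hx) (le_max_left _ _))
    (convex_Icc p q) hz hw
  simpa [Real.norm_eq_abs] using this

private lemma mem_of_incr {f : ℝ → ℝ} (hf : ContDiff ℝ 2 f) {uB vinf : ℝ} (h : uB < vinf)
    (hsign : ∀ w ∈ Ioo (uB - 1) vinf, 0 < f w - f vinf) : vinf ∈ viscousLayerSet f uB := by
  obtain ⟨K, hK, hKb⟩ := lip_bound hf uB vinf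
  obtain ⟨v, h0, hd, ht⟩ := exists_solution_incr (fun w => f w - f vinf)
    (hf.continuous.sub continuous_const) (show uB - 1 < uB by linarith) h hK hsign
    (by
      intro w hw
      have := hKb vinf ⟨h.le, le_refl _⟩ w hw
      rwa [abs_of_nonpos (by linarith [hw.2] : w - vinf ≤ 0), neg_sub] at this)
  exact ⟨v, h0, fun y hy => hd y hy, ht⟩

private lemma mem_of_decr {f : ℝ → ℝ} (hf : ContDiff ℝ 2 f) {uB vinf c : ℝ}
    (h : vinf < uB) (hc : uB < c)
    (hsign : ∀ w ∈ Ioo vinf c, f w - f vinf < 0) : vinf ∈ viscousLayerSet f uB := by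
  obtain ⟨K, hK, hKb⟩ := lip_bound hf vinf uB
  set g1 : ℝ → ℝ := fun x => -(f (-x) - f vinf) with hg1def
  obtain ⟨v1, h0, hd, ht⟩ := exists_solution_incr g1
    (((hf.continuous.comp continuous_neg).sub continuous_const).neg)
    (show -c < -uB by linarith) (show -uB < -vinf by linarith) hK
    (by
      intro w hw
      have : -w ∈ Ioo vinf c := ⟨by linarith [hw.2], by linarith [hw.1]⟩
      have := hsign (-w) this
      simp only [hg1def]
      linarith)
    (by
      intro w hw
      have hmem : -w ∈ Icc vinf uB := ⟨by linarith [hw.2], by linarith [hw.1]⟩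
      have := hKb vinf ⟨le_refl _, h.le⟩ (-w) hmem
      have habs : |g1 w| = |f (-w) - f vinf| := by
        simp only [hg1def]; rw [abs_neg]
      rw [habs]
      have h2 : |(-w) - vinf| = -vinf - w := by
        rw [abs_of_nonneg (by linarith [hw.2] : (0:ℝ) ≤ -w - vinf)]; ring
      rw [h2] at this
      exact this)
  refine ⟨fun y => -(v1 y), by simp [h0], ?_, ?_⟩
  · intro y hy
    have hneg := (hd y hy).neg
    have : -(g1 (v1 y)) = f (-(v1 y)) - f vinf := by simp [hg1def]
    rwa [this] at hneg
  · have := ht.neg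
    rwa [neg_neg] at this
/-- Theorem 4.1, viscous boundary-layer set for a convex scalar
conservation law: with `f` strictly convex and `u_*` its critical point, if
`u_B ≤ u_*` then the layer set is `(−∞, u_*]`, while if `u_B > u_*` and
`u_B^* < u_*` satisfies `f(u_B^*) = f(u_B)`, then the layer set is
`(−∞, u_B^*) ∪ {u_B}`. -/
theorem viscousLayerSet_eq_convex
    (f : ℝ → ℝ) (hf : ContDiff ℝ 2 f) (hf'' : ∀ u, 0 < deriv (deriv f) u)
    (ustar : ℝ) (hstar : deriv f ustar = 0) (uB : ℝ) :
    (uB ≤ ustar → viscousLayerSet f uB = Set.Iic ustar) ∧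
    (ustar < uB → ∀ uBstar : ℝ, uBstar < ustar → f uBstar = f uB →
      viscousLayerSet f uB = Set.Iio uBstar ∪ {uB}) := by
  have hsm : StrictMono (deriv f) := strictMono_of_deriv_pos hf''
  have hanti : StrictAntiOn f (Iic ustar) := by
    apply strictAntiOn_of_deriv_neg (convex_Iic _) hf.continuous.continuousOn
    intro x hx
    rw [interior_Iic] at hx
    have := hsm hx
    rwa [hstar] at this
  have hmono : StrictMonoOn f (Ici ustar) := by
    apply strictMonoOn_of_deriv_pos (convex_Ici _) hf.continuous.continuousOn
    intro x hx
    rw [interior_Ici] at hx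
    have := hsm hx
    rwa [hstar] at this
  have hself : ∀ u : ℝ, u ∈ viscousLayerSet f u := fun u =>
    ⟨fun _ => u, rfl, fun y _ => by simpa using hasDerivAt_const y u, tendsto_const_nhds⟩
  constructor
  · intro huB
    ext vinf
    simp only [mem_Iic]
    constructor
    · intro hmem
      by_contra hgt
      push_neg at hgt
      exact not_mem_above hf hmono hgt (lt_of_le_of_lt huB hgt) hmem
    · intro hle
      rcases lt_trichotomy vinf uB with hlt | heq | hgt
      · have hvs : vinf < ustar := lt_of_lt_of_le hlt huB
        have hfv : f ustar < f vinf := hanti (mem_Iic.2 hvs.le) (mem_Iic.2 le_rfl) hvs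
        obtain ⟨δ, hδpos, hδ⟩ := Metric.continuousAt_iff.1
          (hf.continuous.continuousAt (x := ustar)) (f vinf - f ustar) (by linarith)
        apply mem_of_decr hf hlt (show uB < ustar + δ by linarith)
        intro w hw
        rcases le_or_gt w ustar with hcase | hcase
        · have := hanti (mem_Iic.2 hvs.le) (mem_Iic.2 hcase) hw.1
          linarith
        · have hdw : dist w ustar < δ := by
            rw [Real.dist_eq, abs_of_pos (by linarith)]
            linarith [hw.2]
          have := hδ hdw
          rw [Real.dist_eq] at this
          have := (abs_lt.1 this).2
          linarith
      · exact heq ▸ hself uB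
      · apply mem_of_incr hf hgt
        intro w hw
        have hwlt : w < vinf := hw.2
        have := hanti (mem_Iic.2 (le_trans hwlt.le hle)) (mem_Iic.2 hle) hwlt
        linarith
  · intro huB uBstar hustar hfeq
    ext vinf
    simp only [mem_union, mem_Iio, mem_singleton_iff]
    constructor
    · intro hmem
      by_cases hvB : vinf = uB
      · right; exact hvB
      left
      by_contra hge
      push_neg at hge
      obtain ⟨v, hv0, hvd, hvt⟩ := hmem
      rcases lt_trichotomy vinf uB with hlt | heq | hgt
      · rcases le_or_gt ustar vinf with hcase | hcase
        · -- ustar ≤ vinf < uB : solution increases, contradiction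
          have habove : ∀ y, 0 ≤ y → vinf < v y :=
            stays_above hf rfl hvd (by rw [hv0]; exact hlt)
          have hmono2 : StrictMonoOn v (Ici (0:ℝ)) := by
            apply strictMonoOn_of_deriv_pos (convex_Ici _)
            · intro t ht
              exact ((hvd t ht).continuousAt).continuousWithinAt
            · intro t ht
              rw [interior_Ici] at ht
              rw [(hvd t ht.le).deriv]
              have h1 := habove t ht.le
              have h2 : f vinf < f (v t) :=
                hmono (mem_Ici.2 hcase) (mem_Ici.2 (le_trans hcase h1.le)) h1
              linarith
          have h1 : v 1 ≤ vinf := by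
            apply ge_of_tendsto hvt
            filter_upwards [eventually_ge_atTop (1:ℝ)] with z hz
            rcases eq_or_lt_of_le hz with h | h
            · rw [← h]
            · exact (hmono2 (mem_Ici.2 zero_le_one) (mem_Ici.2 (by linarith)) h).le
          have h2 : uB < v 1 := by
            rw [← hv0]
            exact hmono2 (mem_Ici.2 le_rfl) (mem_Ici.2 zero_le_one) one_pos
          linarith
        · -- uBstar ≤ vinf < ustar : conjugate point estar
          have hfle : f vinf ≤ f uB := by
            rw [← hfeq]
            exact hanti.antitoneOn (mem_Iic.2 hustar.le) (mem_Iic.2 hcase.le) hge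
          have hfgt : f ustar < f vinf := hanti (mem_Iic.2 hcase.le) (mem_Iic.2 le_rfl) hcase
          obtain ⟨estar, hestar, hfe⟩ := intermediate_value_Icc huB.le
            (hf.continuous.continuousOn : ContinuousOn f (Icc ustar uB)) ⟨hfgt.le, hfle⟩
          have hene : ustar < estar := by
            rcases eq_or_lt_of_le hestar.1 with h | h
            · exfalso
              rw [← h] at hfe
              linarith
            · exact h
          rcases eq_or_lt_of_le hestar.2 with heB | heB
          · have hequil : f uB = f vinf := by rw [← heB]; exact hfe
            have hconst : ∀ y, 0 ≤ y → v y = uB := fun y hy =>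
              (eq_aux hf hequil hy hvd).1 hv0
            have hten : Tendsto v atTop (nhds uB) := by
              apply Tendsto.congr' _ tendsto_const_nhds
              filter_upwards [eventually_ge_atTop (0:ℝ)] with z hz
              exact (hconst z hz).symm
            exact hvB (tendsto_nhds_unique hvt hten)
          · have habove : ∀ y, 0 ≤ y → estar < v y :=
              stays_above hf hfe hvd (by rw [hv0]; exact heB)
            have hlim : estar ≤ vinf := by
              apply ge_of_tendsto hvt
              filter_upwards [eventually_ge_atTop (0:ℝ)] with z hz
              exact (habove z hz).le
            linarith
      · exact absurd heq hvB
      · exact absurd ⟨v, hv0, hvd, hvt⟩ (not_mem_above hf hmono (lt_trans huB hgt) hgt)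
    · rintro (hlt | heq)
      · have hfv : f uB < f vinf := by
          rw [← hfeq]
          exact hanti (mem_Iic.2 (lt_trans hlt hustar).le) (mem_Iic.2 hustar.le) hlt
        obtain ⟨δ, hδpos, hδ⟩ := Metric.continuousAt_iff.1
          (hf.continuous.continuousAt (x := uB)) (f vinf - f uB) (by linarith)
        apply mem_of_decr hf (lt_trans (lt_trans hlt hustar) huB) (show uB < uB + δ by linarith)
        intro w hw
        rcases le_or_gt w ustar with hcase | hcase
        · have := hanti (mem_Iic.2 (lt_trans hlt hustar).le) (mem_Iic.2 hcase) hw.1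
          linarith
        · rcases le_or_gt w uB with hcase2 | hcase2
          · have : f w ≤ f uB :=
              hmono.monotoneOn (mem_Ici.2 hcase.le) (mem_Ici.2 huB.le) hcase2
            linarith
          · have hdw : dist w uB < δ := by
              rw [Real.dist_eq, abs_of_pos (by linarith)]
              linarith [hw.2]
            have := hδ hdw
            rw [Real.dist_eq] at this
            have := (abs_lt.1 this).2
            linarith
      · exact heq ▸ hself uB
end
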